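/- Let V be a finite-dimensional real inner product space, Ω ⊆ V a nonempty proper open convex cone which is homogeneous, and H ⊆ V a linear subspace with H ∩ closure(Ω) = {0}. Then H^⊥ ∩ (Ω + H) is a nonempty proper open convex cone in the subspace H^⊥: it is open in H^⊥, convex, closed under multiplication by positive scalars, and its closure C satisfies C ∩ (−C) = {0}. Consequently S := H^⊥ + i(H^⊥ ∩ (Ω + H)) is a Siegel domain of genus 1 in (H^⊥)^ℂ. -/

import Mathlib

open Set Filter
open scoped Pointwise RealInnerProductSpace

/-- A subset `C` of a real vector space is a cone if `t • x ∈ C` for all `x ∈ C`, `t > 0`. -/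
def IsCone {V : Type*} [AddCommGroup V] [Module ℝ V] (C : Set V) : Prop :=
  ∀ x ∈ C, ∀ t : ℝ, 0 < t → t • x ∈ C

/-- The open dual cone of an open cone `Ω` with respect to the inner product. -/
def openDualCone {V : Type*} [NormedAddCommGroup V] [InnerProductSpace ℝ V] (Ω : Set V) :
    Set V :=
  {v | ∀ ω ∈ closure Ω, ω ≠ 0 → 0 < ⟪v, ω⟫}

/-- The sum of a closed cone and a subspace meeting it trivially is closed (finite dim). -/
lemma aux_closed_add_submodule {V : Type*} [NormedAddCommGroup V] [InnerProductSpace ℝ V]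
    [FiniteDimensional ℝ V] (K : Set V) (hK : IsClosed K)
    (hKc : ∀ x ∈ K, ∀ t : ℝ, 0 < t → t • x ∈ K)
    (H : Submodule ℝ V) (hKH : ∀ x ∈ K, x ∈ H → x = 0) :
    IsClosed (K + (H : Set V)) := by
  set P : V →L[ℝ] V := Hᗮ.subtypeL.comp (Hᗮ.orthogonalProjectionOnto) with hP
  have hPsub : ∀ v : V, v - P v ∈ H := by
    intro v
    have := Submodule.sub_starProjection_mem_orthogonal (K := Hᗮ) v
    rwa [Submodule.orthogonal_orthogonal] at this
  have hPker : ∀ v ∈ H, P v = 0 := by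
    intro v hv
    have : Hᗮ.orthogonalProjectionOnto v = 0 :=
      Submodule.orthogonalProjectionOnto_apply_of_mem_orthogonal
        (Submodule.le_orthogonal_orthogonal H hv)
    simp [hP, this]
  have hmemH : ∀ v : V, P v = 0 → v ∈ H := by
    intro v hv
    have := hPsub v
    rwa [hv, sub_zero] at this
  -- lower bound for P on K
  have hbound : ∃ c : ℝ, 0 < c ∧ ∀ a ∈ K, c * ‖a‖ ≤ ‖P a‖ := by
    by_cases htriv : ∀ a ∈ K, a = 0
    · exact ⟨1, one_pos, fun a ha => by simp [htriv a ha]⟩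
    · push_neg at htriv
      obtain ⟨a₀, ha₀K, ha₀⟩ := htriv
      set S : Set V := K ∩ Metric.sphere 0 1 with hS
      have hScpt : IsCompact S :=
        (isCompact_sphere (0:V) 1).of_isClosed_subset (hK.inter Metric.isClosed_sphere)
          inter_subset_right
      have hSne : S.Nonempty := by
        refine ⟨‖a₀‖⁻¹ • a₀, hKc a₀ ha₀K _ (inv_pos.2 (norm_pos_iff.2 ha₀)), ?_⟩
        simp [norm_smul, abs_of_nonneg (inv_nonneg.2 (norm_nonneg a₀)),
          inv_mul_cancel₀ (norm_ne_zero_iff.2 ha₀)]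
      obtain ⟨x₀, hx₀S, hx₀min⟩ := hScpt.exists_isMinOn hSne (P.continuous.norm.continuousOn)
      refine ⟨‖P x₀‖, ?_, ?_⟩
      · rcases (norm_nonneg (P x₀)).lt_or_eq with h | h
        · exact h
        · exfalso
          have hx0 : P x₀ = 0 := norm_eq_zero.1 h.symm
          have hz0 : x₀ = 0 := hKH x₀ hx₀S.1 (hmemH x₀ hx0)
          have h1 : ‖x₀‖ = 1 := mem_sphere_zero_iff_norm.1 hx₀S.2
          rw [hz0] at h1
          simp at h1
      · intro a haK
        rcases eq_or_ne a 0 with rfl | ha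
        · simp
        · have hb : ‖a‖⁻¹ • a ∈ S := by
            refine ⟨hKc a haK _ (inv_pos.2 (norm_pos_iff.2 ha)), ?_⟩
            simp [norm_smul, abs_of_nonneg (inv_nonneg.2 (norm_nonneg a)),
              inv_mul_cancel₀ (norm_ne_zero_iff.2 ha)]
          have hle : ‖P x₀‖ ≤ ‖P (‖a‖⁻¹ • a)‖ := hx₀min hb
          have h2 : ‖P (‖a‖⁻¹ • a)‖ = ‖a‖⁻¹ * ‖P a‖ := by
            rw [map_smul, norm_smul, Real.norm_eq_abs,
              abs_of_nonneg (inv_nonneg.2 (norm_nonneg a))]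
          rw [h2] at hle
          have this := hle
          have hna : (0:ℝ) < ‖a‖ := norm_pos_iff.2 ha
          calc ‖P x₀‖ * ‖a‖ ≤ (‖a‖⁻¹ * ‖P a‖) * ‖a‖ := by
                exact mul_le_mul_of_nonneg_right this hna.le
            _ = ‖P a‖ := by field_simp
  obtain ⟨c, hc, hcb⟩ := hbound
  -- P '' K is closed
  have hPK : IsClosed (P '' K) := by
    apply IsSeqClosed.isClosed
    intro u z hu hz
    choose a haK hau using hu
    obtain ⟨R, hR⟩ : ∃ R : ℝ, ∀ n, ‖u n‖ ≤ R := by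
      obtain ⟨R, hR⟩ := (hz.norm).bddAbove_range
      exact ⟨R, fun n => hR ⟨n, rfl⟩⟩
    have haB : ∀ n, a n ∈ K ∩ Metric.closedBall 0 (c⁻¹ * R) := by
      intro n
      refine ⟨haK n, ?_⟩
      rw [Metric.mem_closedBall, dist_zero_right]
      have h1 : c * ‖a n‖ ≤ ‖P (a n)‖ := hcb _ (haK n)
      rw [hau n] at h1
      have h2 : c * ‖a n‖ ≤ R := h1.trans (hR n)
      calc ‖a n‖ = c⁻¹ * (c * ‖a n‖) := by field_simp
        _ ≤ c⁻¹ * R := by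
            exact mul_le_mul_of_nonneg_left h2 (inv_nonneg.2 hc.le)
    have hcpt : IsCompact (K ∩ Metric.closedBall 0 (c⁻¹ * R)) :=
      (isCompact_closedBall (0:V) _).of_isClosed_subset
        (hK.inter Metric.isClosed_closedBall) inter_subset_right
    obtain ⟨b, hb, φ, hφ, hlim⟩ := hcpt.tendsto_subseq haB
    have h1 : Tendsto (fun n => P (a (φ n))) atTop (nhds (P b)) :=
      (P.continuous.tendsto b).comp hlim
    have h2 : Tendsto (fun n => u (φ n)) atTop (nhds z) := hz.comp hφ.tendsto_atTop
    have h3 : (fun n => P (a (φ n))) = fun n => u (φ n) := by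
      funext n; rw [hau]
    rw [h3] at h1
    exact ⟨b, hb.1, tendsto_nhds_unique h1 h2⟩
  -- K + H = P ⁻¹' (P '' K)
  have heq : K + (H : Set V) = P ⁻¹' (P '' K) := by
    ext x
    constructor
    · rintro ⟨a, ha, h, hh, rfl⟩
      refine ⟨a, ha, ?_⟩
      simp [map_add, hPker h hh]
    · rintro ⟨a, ha, hax⟩
      refine ⟨a, ha, x - a, ?_, by show a + (x - a) = x; abel⟩
      apply hmemH
      rw [map_sub, hax, sub_self]
  rw [heq]
  exact hPK.preimage P.continuous

theorem stmt_12 {V : Type*} [NormedAddCommGroup V] [InnerProductSpace ℝ V]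
    [FiniteDimensional ℝ V]
    (Ω : Set V) (hne : Ω.Nonempty) (hopen : IsOpen Ω) (hconv : Convex ℝ Ω)
    (hcone : IsCone Ω) (hproper : closure Ω ∩ -closure Ω = {0})
    (hhom : ∀ x ∈ Ω, ∀ y ∈ Ω, ∃ g : V ≃ₗ[ℝ] V, ⇑g '' Ω = Ω ∧ g x = y)
    (H : Submodule ℝ V) (hH : (H : Set V) ∩ closure Ω = {0}) :
    ((Hᗮ : Set V) ∩ (Ω + (H : Set V))).Nonempty ∧
      IsOpen {x : Hᗮ | (x : V) ∈ Ω + (H : Set V)} ∧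
      Convex ℝ ((Hᗮ : Set V) ∩ (Ω + (H : Set V))) ∧
      IsCone ((Hᗮ : Set V) ∩ (Ω + (H : Set V))) ∧
      closure ((Hᗮ : Set V) ∩ (Ω + (H : Set V))) ∩
        -closure ((Hᗮ : Set V) ∩ (Ω + (H : Set V))) = {0} := by
  set K := closure Ω with hKdef
  have hKcone : ∀ x ∈ K, ∀ t : ℝ, 0 < t → t • x ∈ K := by
    intro x hx t ht
    have h1 : t • x ∈ (t • ·) '' closure Ω := ⟨x, hx, rfl⟩
    have h2 : (t • ·) '' closure Ω ⊆ closure ((t • ·) '' Ω) :=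
      image_closure_subset_closure_image (continuous_const_smul t)
    have h3 : (t • ·) '' Ω ⊆ Ω := by
      rintro _ ⟨y, hy, rfl⟩; exact hcone y hy t ht
    exact closure_mono h3 (h2 h1)
  have hKconv : Convex ℝ K := hconv.closure
  have hKadd : ∀ x ∈ K, ∀ y ∈ K, x + y ∈ K := by
    intro x hx y hy
    have hmid : (1/2 : ℝ) • x + (1/2 : ℝ) • y ∈ K :=
      hKconv hx hy (by norm_num) (by norm_num) (by norm_num)
    have := hKcone _ hmid 2 (by norm_num)
    have heq : (2:ℝ) • ((1/2 : ℝ) • x + (1/2 : ℝ) • y) = x + y := by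
      rw [smul_add, smul_smul, smul_smul]; norm_num
    rwa [heq] at this
  have hKH : ∀ x ∈ K, x ∈ H → x = 0 := by
    intro x hx hxH
    have : x ∈ (H : Set V) ∩ closure Ω := ⟨hxH, hx⟩
    rw [hH] at this
    exact this
  -- nonemptiness witness
  obtain ⟨a, ha⟩ := hne
  set p : V := (Hᗮ.orthogonalProjectionOnto a : V) with hp
  have hpH : p ∈ Hᗮ := (Hᗮ.orthogonalProjectionOnto a).2
  have hap : a - p ∈ H := by
    have := Submodule.sub_starProjection_mem_orthogonal (K := Hᗮ) a
    rwa [Submodule.orthogonal_orthogonal] at this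
  have hpmem : p ∈ (Hᗮ : Set V) ∩ (Ω + (H : Set V)) := by
    refine ⟨hpH, a, ha, -(a - p), H.neg_mem hap, by show a + -(a - p) = p; abel⟩
  refine ⟨⟨p, hpmem⟩, ?_, ?_, ?_, ?_⟩
  -- open
  · have hO : IsOpen (Ω + (H : Set V)) := hopen.add_right
    exact hO.preimage continuous_subtype_val
  -- convex
  · exact (Hᗮ.convex).inter (hconv.add (H.convex))
  -- cone
  · rintro x ⟨hx1, ω, hω, h, hh, rfl⟩ t ht
    exact ⟨Hᗮ.smul_mem t hx1, t • ω, hcone ω hω t ht, t • h, H.smul_mem t hh, (smul_add t ω h).symm⟩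
  -- properness
  · set C := (Hᗮ : Set V) ∩ (Ω + (H : Set V)) with hC
    have hCcone : ∀ x ∈ C, ∀ t : ℝ, 0 < t → t • x ∈ C := by
      rintro x ⟨hx1, ω, hω, h, hh, rfl⟩ t ht
      exact ⟨Hᗮ.smul_mem t hx1, t • ω, hcone ω hω t ht, t • h, H.smul_mem t hh,
        (smul_add t ω h).symm⟩
    have hclosedKH : IsClosed (K + (H : Set V)) :=
      aux_closed_add_submodule K isClosed_closure hKcone H hKH
    have hsub : closure C ⊆ (Hᗮ : Set V) ∩ (K + (H : Set V)) := by
      have h1 : C ⊆ (Hᗮ : Set V) ∩ (K + (H : Set V)) := by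
        rintro x ⟨hx1, ω, hω, h, hh, rfl⟩
        exact ⟨hx1, ω, subset_closure hω, h, hh, rfl⟩
      have h2 : IsClosed ((Hᗮ : Set V) ∩ (K + (H : Set V))) :=
        (Hᗮ.closed_of_finiteDimensional).inter hclosedKH
      exact closure_minimal h1 h2
    apply Set.eq_singleton_iff_unique_mem.2
    constructor
    · -- 0 ∈ both
      have hlim : Tendsto (fun n : ℕ => (1 / ((n:ℝ) + 1)) • p) atTop (nhds (0:V)) := by
        simpa using (tendsto_one_div_add_atTop_nhds_zero_nat (𝕜 := ℝ)).smul_const p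
      have h0 : (0:V) ∈ closure C :=
        mem_closure_of_tendsto hlim
          (Eventually.of_forall fun n => hCcone p hpmem _ (by positivity))
      exact ⟨h0, by simpa using h0⟩
    · rintro x ⟨hx1, hx2⟩
      obtain ⟨hxH, ω₁, hω₁, h₁, hh₁, hsum₁⟩ := hsub hx1
      have hx2' : -x ∈ closure C := Set.mem_neg.mp hx2
      obtain ⟨-, ω₂, hω₂, h₂, hh₂, hsum₂⟩ := hsub hx2'
      have hsum₁' : ω₁ + h₁ = x := hsum₁
      have hsum₂' : ω₂ + h₂ = -x := hsum₂
      have hsum : ω₁ + ω₂ + (h₁ + h₂) = 0 := by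
        have h' : (ω₁ + h₁) + (ω₂ + h₂) = x + -x := by rw [hsum₁', hsum₂']
        rw [add_neg_cancel] at h'
        linear_combination (norm := module) h'
      have hωH : ω₁ + ω₂ ∈ H := by
        have : ω₁ + ω₂ = -(h₁ + h₂) := by
          have := hsum; linear_combination (norm := module) this
        rw [this]
        exact H.neg_mem (H.add_mem hh₁ hh₂)
      have hω0 : ω₁ + ω₂ = 0 := hKH _ (hKadd _ hω₁ _ hω₂) hωH
      have hω₁0 : ω₁ = 0 := by
        have hneg : -ω₁ ∈ K := by
          have h' : -ω₁ = ω₂ := neg_eq_of_add_eq_zero_right hω0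
          rw [h']; exact hω₂
        have hmem : ω₁ ∈ K ∩ -K := ⟨hω₁, Set.mem_neg.mpr hneg⟩
        rw [hproper] at hmem
        exact hmem
      have hω₂0 : ω₂ = 0 := by
        have := hω0; rw [hω₁0, zero_add] at this; exact this
      have hxh : x = h₁ := by rw [← hsum₁', hω₁0, zero_add]
      have : x ∈ H ⊓ Hᗮ := ⟨hxh ▸ hh₁, hxH⟩
      have hdisj : H ⊓ Hᗮ = ⊥ := by
        simpa using (Submodule.orthogonal_disjoint H).eq_bot
      rw [hdisj] at this
      exact this
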